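/- Let B be a real Banach space (separable, with its Borel σ-algebra), let x and x' be independent, identically distributed Bochner-integrable B-valued random variables, and let ε be a Rademacher random variable (taking values ±1 with probability 1/2 each) independent of (x, x'). Then for every w ∈ B: −‖E[x]‖ + E[‖w − x‖] ≤ E[‖w + ε(x' − x)‖]. -/

import Mathlib

open MeasureTheory ProbabilityTheory
open scoped ENNReal

/-- **Symmetrization inequality with a Rademacher sign.**
Let `B` be a separable real Banach space (with its Borel σ-algebra), `x, x'`
independent identically distributed Bochner-integrable `B`-valued random variables,
and `ε` a Rademacher random variable independent of `(x, x')`.  Then for every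
`w ∈ B`: `−‖E[x]‖ + E‖w − x‖ ≤ E‖w + ε(x' − x)‖`. -/
theorem stmt_13 {Ω B : Type*} [MeasurableSpace Ω]
    [NormedAddCommGroup B] [NormedSpace ℝ B] [CompleteSpace B]
    [MeasurableSpace B] [BorelSpace B] [SecondCountableTopology B]
    (μ : Measure Ω) [IsProbabilityMeasure μ]
    (x x' : Ω → B) (ε : Ω → ℝ)
    (hx : Measurable x) (hx' : Measurable x') (hε : Measurable ε)
    (hxint : Integrable x μ) (hx'int : Integrable x' μ)
    (hindep : IndepFun x x' μ) (hident : IdentDistrib x x' μ μ)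
    (hεlaw : μ.map ε = (1 / 2 : ℝ≥0∞) • Measure.dirac (1 : ℝ)
        + (1 / 2 : ℝ≥0∞) • Measure.dirac (-1 : ℝ))
    (hεindep : IndepFun (fun ω => (x ω, x' ω)) ε μ)
    (w : B) :
    -‖∫ ω, x ω ∂μ‖ + ∫ ω, ‖w - x ω‖ ∂μ ≤ ∫ ω, ‖w + ε ω • (x' ω - x ω)‖ ∂μ := by
  have hxae : AEMeasurable x μ := hx.aemeasurable
  have hx'ae : AEMeasurable x' μ := hx'.aemeasurable
  set ν : Measure B := μ.map x with hνdef
  have hprob : IsProbabilityMeasure ν := Measure.isProbabilityMeasure_map hxae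
  have hν' : μ.map x' = ν := hident.map_eq.symm
  have hρ : μ.map (fun ω => (x ω, x' ω)) = ν.prod ν := by
    rw [(indepFun_iff_map_prod_eq_prod_map_map hxae hx'ae).mp hindep, hν']
  set η : Measure ℝ := μ.map ε with hηdef
  have hηprob : IsProbabilityMeasure η := Measure.isProbabilityMeasure_map hε.aemeasurable
  have hT : μ.map (fun ω => ((x ω, x' ω), ε ω)) = (ν.prod ν).prod η := by
    rw [(indepFun_iff_map_prod_eq_prod_map_map (hx.prodMk hx').aemeasurable
      hε.aemeasurable).mp hεindep, hρ]
  have hid : Integrable (fun a : B => a) ν := by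
    have h : Integrable id ν := by
      rw [hνdef, integrable_map_measure aestronglyMeasurable_id hxae]
      exact hxint
    exact h
  set m : B := ∫ a, a ∂ν with hm
  have hmean : ∫ ω, x ω ∂μ = m := by
    rw [hm, hνdef]
    exact (integral_map hxae aestronglyMeasurable_id).symm
  have hL : ∫ ω, ‖w - x ω‖ ∂μ = ∫ a, ‖w - a‖ ∂ν := by
    rw [hνdef]
    have hg : AEStronglyMeasurable (fun a : B => ‖w - a‖) (Measure.map x μ) :=
      Continuous.aestronglyMeasurable (by fun_prop)
    exact (integral_map hxae hg).symm
  -- integrability of |·| wrt η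
  have hdiracInt : ∀ (f : ℝ → ℝ), Continuous f → ∀ a : ℝ,
      Integrable f (Measure.dirac a) := by
    intro f hf a
    refine ⟨hf.aestronglyMeasurable, ?_⟩
    simp [HasFiniteIntegral, lintegral_dirac]
  have habs : Integrable (fun e : ℝ => |e|) η := by
    rw [hεlaw]
    exact ((hdiracInt _ continuous_abs 1).smul_measure (by norm_num)).add_measure
      ((hdiracInt _ continuous_abs (-1)).smul_measure (by norm_num))
  have hsum : Integrable (fun p : B × B => ‖p.1‖ + ‖p.2‖) (ν.prod ν) := by
    have h1 : Integrable (fun p : B × B => ‖p.1‖ * 1) (ν.prod ν) :=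
      hid.norm.mul_prod (integrable_const 1)
    have h2 : Integrable (fun p : B × B => (1:ℝ) * ‖p.2‖) (ν.prod ν) :=
      (integrable_const 1).mul_prod hid.norm
    exact (h1.add h2).congr (Filter.Eventually.of_forall fun p => by simp)
  have hcont : Continuous fun q : (B × B) × ℝ => ‖w + q.2 • (q.1.2 - q.1.1)‖ := by
    fun_prop
  have hbig : Integrable (fun q : (B × B) × ℝ => ‖w + q.2 • (q.1.2 - q.1.1)‖)
      ((ν.prod ν).prod η) := by
    refine Integrable.mono' ((integrable_const ‖w‖).add (hsum.mul_prod habs))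
      hcont.aestronglyMeasurable (Filter.Eventually.of_forall fun q => ?_)
    simp only [Pi.add_apply]
    rw [Real.norm_eq_abs, abs_of_nonneg (norm_nonneg _)]
    have h1 : ‖q.2 • (q.1.2 - q.1.1)‖ = |q.2| * ‖q.1.2 - q.1.1‖ := by
      rw [norm_smul, Real.norm_eq_abs]
    have h2 : ‖q.1.2 - q.1.1‖ ≤ ‖q.1.1‖ + ‖q.1.2‖ := by
      calc ‖q.1.2 - q.1.1‖ ≤ ‖q.1.2‖ + ‖q.1.1‖ := norm_sub_le _ _
        _ = ‖q.1.1‖ + ‖q.1.2‖ := add_comm _ _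
    have h3 := norm_add_le w (q.2 • (q.1.2 - q.1.1))
    have h4 := abs_nonneg q.2
    nlinarith [norm_nonneg (q.1.2 - q.1.1)]
  have hR : ∫ ω, ‖w + ε ω • (x' ω - x ω)‖ ∂μ
      = ∫ q, ‖w + q.2 • (q.1.2 - q.1.1)‖ ∂((ν.prod ν).prod η) := by
    rw [← hT, integral_map ((hx.prodMk hx').prodMk hε).aemeasurable
      hcont.aestronglyMeasurable]
  have hfub : ∫ q, ‖w + q.2 • (q.1.2 - q.1.1)‖ ∂((ν.prod ν).prod η)
      = ∫ p, (∫ e, ‖w + e • (p.2 - p.1)‖ ∂η) ∂(ν.prod ν) := integral_prod _ hbig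
  have hinner : ∀ c : B, ∫ e, ‖w + e • c‖ ∂η = 2⁻¹ * ‖w + c‖ + 2⁻¹ * ‖w - c‖ := by
    intro c
    have hfc : Continuous fun e : ℝ => ‖w + e • c‖ := by fun_prop
    rw [hεlaw, integral_add_measure ((hdiracInt _ hfc 1).smul_measure (by norm_num))
      ((hdiracInt _ hfc (-1)).smul_measure (by norm_num)),
      integral_smul_measure, integral_smul_measure, integral_dirac, integral_dirac]
    have : ((1/2 : ℝ≥0∞)).toReal = 2⁻¹ := by
      rw [ENNReal.toReal_div]; norm_num
    rw [this]
    have h1 : (1:ℝ) • c = c := one_smul _ _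
    have h2 : w + (-1:ℝ) • c = w - c := by rw [neg_smul, one_smul]; abel
    rw [h1, h2]
    simp [smul_eq_mul]
  have hu : Integrable (fun p : B × B => ‖w + (p.2 - p.1)‖) (ν.prod ν) := by
    refine Integrable.mono' ((integrable_const ‖w‖).add hsum)
      (Continuous.aestronglyMeasurable (by fun_prop))
      (Filter.Eventually.of_forall fun p => ?_)
    simp only [Pi.add_apply]
    rw [Real.norm_eq_abs, abs_of_nonneg (norm_nonneg _)]
    calc ‖w + (p.2 - p.1)‖ ≤ ‖w‖ + ‖p.2 - p.1‖ := norm_add_le _ _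
      _ ≤ ‖w‖ + (‖p.1‖ + ‖p.2‖) := by
          have := norm_sub_le p.2 p.1; linarith
  have hv : Integrable (fun p : B × B => ‖w - (p.2 - p.1)‖) (ν.prod ν) := by
    refine Integrable.mono' ((integrable_const ‖w‖).add hsum)
      (Continuous.aestronglyMeasurable (by fun_prop))
      (Filter.Eventually.of_forall fun p => ?_)
    simp only [Pi.add_apply]
    rw [Real.norm_eq_abs, abs_of_nonneg (norm_nonneg _)]
    calc ‖w - (p.2 - p.1)‖ ≤ ‖w‖ + ‖p.2 - p.1‖ := norm_sub_le _ _
      _ ≤ ‖w‖ + (‖p.1‖ + ‖p.2‖) := by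
          have := norm_sub_le p.2 p.1; linarith
  have hswap : ∫ p, ‖w - (p.2 - p.1)‖ ∂(ν.prod ν)
      = ∫ p, ‖w + (p.2 - p.1)‖ ∂(ν.prod ν) := by
    have h := integral_prod_swap (μ := ν) (ν := ν)
      (fun p : B × B => ‖w + (p.2 - p.1)‖)
    have heq : ∀ z : B × B, ‖w + (z.swap.2 - z.swap.1)‖ = ‖w - (z.2 - z.1)‖ := by
      intro z
      have : w + (z.1 - z.2) = w - (z.2 - z.1) := by abel
      simp [Prod.swap, this]
    calc ∫ p, ‖w - (p.2 - p.1)‖ ∂(ν.prod ν)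
        = ∫ z, ‖w + (z.swap.2 - z.swap.1)‖ ∂(ν.prod ν) := by
          exact integral_congr_ae (Filter.Eventually.of_forall fun z => (heq z).symm)
      _ = ∫ p, ‖w + (p.2 - p.1)‖ ∂(ν.prod ν) := h
  have hsplit : ∫ p, (2⁻¹ * ‖w + (p.2 - p.1)‖ + 2⁻¹ * ‖w - (p.2 - p.1)‖) ∂(ν.prod ν)
      = ∫ p, ‖w + (p.2 - p.1)‖ ∂(ν.prod ν) := by
    rw [integral_add (hu.const_mul _) (hv.const_mul _), integral_const_mul,
      integral_const_mul, hswap]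
    ring
  have hjensen : -‖m‖ + ∫ a, ‖w - a‖ ∂ν ≤ ∫ p, ‖w + (p.2 - p.1)‖ ∂(ν.prod ν) := by
    rw [integral_prod _ hu]
    have hpt : ∀ a : B, ‖w - a‖ - ‖m‖ ≤ ∫ b, ‖w + (b - a)‖ ∂ν := by
      intro a
      have hfn : (fun b : B => w + (b - a)) = fun b => (w - a) + b := by
        funext b; abel
      have hval : ∫ b, (w + (b - a)) ∂ν = (w - a) + m := by
        rw [hfn, integral_add (integrable_const _) hid, integral_const,
          probReal_univ, one_smul]
      have h1 : ‖w - a‖ - ‖m‖ ≤ ‖(w - a) + m‖ := by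
        have h := norm_sub_le ((w - a) + m) m
        simp only [add_sub_cancel_right] at h
        linarith
      calc ‖w - a‖ - ‖m‖ ≤ ‖(w - a) + m‖ := h1
        _ = ‖∫ b, (w + (b - a)) ∂ν‖ := by rw [hval]
        _ ≤ ∫ b, ‖w + (b - a)‖ ∂ν := norm_integral_le_integral_norm _
    have hwa : Integrable (fun a : B => ‖w - a‖) ν := ((integrable_const w).sub hid).norm
    have hlhsint : Integrable (fun a : B => ‖w - a‖ - ‖m‖) ν :=
      hwa.sub (integrable_const _)
    have hrhsint : Integrable (fun a : B => ∫ b, ‖w + (b - a)‖ ∂ν) ν :=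
      hu.integral_prod_left
    have hmono := integral_mono hlhsint hrhsint hpt
    rw [integral_sub hwa (integrable_const _), integral_const, probReal_univ,
      one_smul] at hmono
    linarith
  rw [hmean, hL, hR, hfub]
  calc -‖m‖ + ∫ a, ‖w - a‖ ∂ν
      ≤ ∫ p, ‖w + (p.2 - p.1)‖ ∂(ν.prod ν) := hjensen
    _ = ∫ p, (2⁻¹ * ‖w + (p.2 - p.1)‖ + 2⁻¹ * ‖w - (p.2 - p.1)‖) ∂(ν.prod ν) :=
        hsplit.symm
    _ = ∫ p, (∫ e, ‖w + e • (p.2 - p.1)‖ ∂η) ∂(ν.prod ν) := by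
        exact integral_congr_ae (Filter.Eventually.of_forall fun p => (hinner _).symm)
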